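/- Let W be an admissible double-well potential and, for a > 0, let U_a be the one-dimensional solution of slope a. Then for every δ > 0 there exists a constant C(δ) (depending also on W) such that for all a ≥ δ, all γ ∈ (1/2, 2) and all t ∈ ℝ, |U_a^{−1}(U_{γa}(t)) − γ t| ≤ C(δ)|γ − 1|. -/

import Mathlib

open MeasureTheory Metric Set

/-- An admissible double-well potential: `W ≥ 0`, `W = 0` outside `[-1,1]`, `W` is `C²`
on `[-1,1]`, `W(±1) = 0`, `W'(±1) = 0`, `W''(±1) > 0`, `W' > 0` on `(-1,0)`,
`W' < 0` on `(0,1)` and `W''(0) < 0`. -/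
structure DoubleWell (W : ℝ → ℝ) : Prop where
  nonneg : ∀ t, 0 ≤ W t
  zero_outside : ∀ t, 1 < |t| → W t = 0
  smooth : ContDiffOn ℝ 2 W (Set.Icc (-1) 1)
  zero_at_one : W 1 = 0
  zero_at_neg_one : W (-1) = 0
  deriv_at_one : deriv W 1 = 0
  deriv_at_neg_one : deriv W (-1) = 0
  dd_one : 0 < derivWithin (derivWithin W (Set.Icc (-1) 1)) (Set.Icc (-1) 1) 1
  dd_neg_one : 0 < derivWithin (derivWithin W (Set.Icc (-1) 1)) (Set.Icc (-1) 1) (-1)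
  deriv_pos : ∀ t ∈ Set.Ioo (-1 : ℝ) 0, 0 < deriv W t
  deriv_neg : ∀ t ∈ Set.Ioo (0 : ℝ) 1, deriv W t < 0
  dd_zero : deriv (deriv W) 0 < 0

/-- `U` is the one-dimensional solution of slope `a`: the strictly increasing solution of
`U'' = W'(U)` with `U(0) = 0` and first integral `(U')² = 2W(U) + a²`, characterized by
`U' = √(2W(U) + a²)`. -/
def IsUa (W : ℝ → ℝ) (a : ℝ) (U : ℝ → ℝ) : Prop :=
  U 0 = 0 ∧ ∀ t, HasDerivAt U (Real.sqrt (2 * W (U t) + a ^ 2)) t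

lemma DoubleWell.cont {W : ℝ → ℝ} (hW : DoubleWell W) : Continuous W := by
  rw [continuous_iff_continuousAt]
  intro x
  rcases lt_trichotomy |x| 1 with h | h | h
  · have hx := abs_lt.mp h
    exact hW.smooth.continuousOn.continuousAt (Icc_mem_nhds hx.1 hx.2)
  · rcases (abs_eq (by norm_num : (0:ℝ) ≤ 1)).mp h with rfl | rfl
    · have h1 : ContinuousWithinAt W (Set.Iic 1) 1 := by
        have h0 : ContinuousWithinAt W (Set.Icc (-1) 1) 1 :=
          hW.smooth.continuousOn.continuousWithinAt (by norm_num)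
        rwa [ContinuousWithinAt,
          nhdsWithin_Icc_eq_nhdsLE (by norm_num : (-1:ℝ) < 1)] at h0
      have h2 : ContinuousWithinAt W (Set.Ici 1) 1 := by
        apply (continuousWithinAt_const (b := (0:ℝ))).congr
        · intro y hy
          rcases eq_or_lt_of_le (mem_Ici.mp hy) with rfl | hy'
          · exact hW.zero_at_one
          · exact hW.zero_outside y (by rw [abs_of_pos (by linarith)]; exact hy')
        · exact hW.zero_at_one
      have h3 := continuousWithinAt_union.mpr ⟨h1, h2⟩
      rwa [Set.Iic_union_Ici, continuousWithinAt_univ] at h3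
    · have h1 : ContinuousWithinAt W (Set.Ici (-1)) (-1) := by
        have h0 : ContinuousWithinAt W (Set.Icc (-1) 1) (-1) :=
          hW.smooth.continuousOn.continuousWithinAt (by norm_num)
        rwa [ContinuousWithinAt,
          nhdsWithin_Icc_eq_nhdsGE (by norm_num : (-1:ℝ) < 1)] at h0
      have h2 : ContinuousWithinAt W (Set.Iic (-1)) (-1) := by
        apply (continuousWithinAt_const (b := (0:ℝ))).congr
        · intro y hy
          rcases eq_or_lt_of_le (mem_Iic.mp hy) with h' | hy'
          · rw [h']; exact hW.zero_at_neg_one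
          · exact hW.zero_outside y (by rw [abs_of_neg (by linarith)]; linarith)
        · exact hW.zero_at_neg_one
      have h3 := continuousWithinAt_union.mpr ⟨h2, h1⟩
      rwa [Set.Iic_union_Ici, continuousWithinAt_univ] at h3
  · have hmem : {t : ℝ | 1 < |t|} ∈ nhds x :=
      (isOpen_lt continuous_const continuous_abs).mem_nhds h
    apply (continuousAt_const (y := (0:ℝ))).congr
    filter_upwards [hmem] with y hy
    exact (hW.zero_outside y hy).symm

lemma inv_eq {W : ℝ → ℝ} (hWc : Continuous W) (hWnn : ∀ t, 0 ≤ W t)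
    {a : ℝ} (ha : 0 < a) {U : ℝ → ℝ} (hU : IsUa W a U) (y : ℝ) :
    (∫ s in (0:ℝ)..(U y), (Real.sqrt (2 * W s + a ^ 2))⁻¹) = y := by
  set g : ℝ → ℝ := fun s => (Real.sqrt (2 * W s + a ^ 2))⁻¹ with hg
  have hpos : ∀ s, 0 < Real.sqrt (2 * W s + a ^ 2) := fun s =>
    Real.sqrt_pos.mpr (by nlinarith [hWnn s])
  have hgc : Continuous g := by
    apply Continuous.inv₀
    · exact ((continuous_const.mul hWc).add continuous_const).sqrt
    · exact fun s => (hpos s).ne'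
  have hG : ∀ x : ℝ, HasDerivAt (fun u => ∫ s in (0:ℝ)..u, g s) (g x) x := fun x =>
    intervalIntegral.integral_hasDerivAt_right (hgc.intervalIntegrable _ _)
      (hgc.stronglyMeasurableAtFilter _ _) hgc.continuousAt
  have hf : ∀ z, HasDerivAt (fun z => (∫ s in (0:ℝ)..(U z), g s) - z) 0 z := by
    intro z
    have h1 := ((hG (U z)).comp z (hU.2 z)).sub (hasDerivAt_id z)
    refine h1.congr_deriv ?_
    simp only [hg]
    rw [inv_mul_cancel₀ (hpos (U z)).ne']
    ring
  have hc := is_const_of_deriv_eq_zero (fun z => (hf z).differentiableAt)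
    (fun z => (hf z).deriv) y 0
  simp only [hU.1, intervalIntegral.integral_same, sub_zero] at hc
  linarith [hc]

set_option maxHeartbeats 1600000 in
/-- **Theorem (Statement 7).** Let `W` be an admissible double-well potential. For every
`δ > 0` there is a constant `C(δ)` such that for all `a ≥ δ`, all `γ ∈ (1/2, 2)` and
all `t ∈ ℝ`, `|U_a⁻¹(U_{γa}(t)) - γ t| ≤ C(δ) |γ - 1|` (here `y = U_a⁻¹(U_{γa}(t))`
is expressed as the unique `y` with `U_a(y) = U_{γa}(t)`). -/
theorem statement7 (W : ℝ → ℝ) (hW : DoubleWell W) (δ : ℝ) (hδ : 0 < δ) :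
    ∃ C : ℝ, 0 < C ∧
      ∀ a : ℝ, δ ≤ a → ∀ γ : ℝ, 1 / 2 < γ → γ < 2 →
        ∀ U V : ℝ → ℝ, IsUa W a U → IsUa W (γ * a) V →
          ∀ t y : ℝ, U y = V t → |y - γ * t| ≤ C * |γ - 1| := by
  have hWc : Continuous W := hW.cont
  obtain ⟨M, hM⟩ := isCompact_Icc.exists_bound_of_continuousOn
    (hWc.continuousOn (s := Set.Icc (-1:ℝ) 1))
  have hMW : ∀ s : ℝ, W s ≤ M + 1 := by
    intro s
    by_cases hs : s ∈ Set.Icc (-1:ℝ) 1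
    · have := hM s hs; rw [Real.norm_eq_abs] at this
      linarith [le_abs_self (W s)]
    · have h1s : 1 < |s| := by
        by_contra h; push_neg at h
        exact hs (abs_le.mp h)
      rw [hW.zero_outside s h1s]
      have := hM 0 (by norm_num)
      have h0 := hW.nonneg 0
      rw [Real.norm_eq_abs, abs_of_nonneg h0] at this
      linarith
  have hM0 : 0 ≤ M := by
    have := hM 0 (by norm_num)
    exact le_trans (norm_nonneg _) this
  refine ⟨48 * (M + 1) / δ ^ 3, by positivity, ?_⟩
  intro a ha γ hγ1 hγ2 U V hU hV t y hxy
  have ha0 : 0 < a := lt_of_lt_of_le hδ ha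
  have hγ0 : 0 < γ := by linarith
  have hγa : 0 < γ * a := by positivity
  set g1 : ℝ → ℝ := fun s => (Real.sqrt (2 * W s + a ^ 2))⁻¹ with hg1
  set g2 : ℝ → ℝ := fun s => (Real.sqrt (2 * W s + (γ * a) ^ 2))⁻¹ with hg2
  have hpos1 : ∀ s, 0 < Real.sqrt (2 * W s + a ^ 2) := fun s =>
    Real.sqrt_pos.mpr (by nlinarith [hW.nonneg s])
  have hpos2 : ∀ s, 0 < Real.sqrt (2 * W s + (γ * a) ^ 2) := fun s =>
    Real.sqrt_pos.mpr (by nlinarith [hW.nonneg s])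
  have hg1c : Continuous g1 :=
    Continuous.inv₀ ((continuous_const.mul hWc).add continuous_const).sqrt
      (fun s => (hpos1 s).ne')
  have hg2c : Continuous g2 :=
    Continuous.inv₀ ((continuous_const.mul hWc).add continuous_const).sqrt
      (fun s => (hpos2 s).ne')
  have hy : (∫ s in (0:ℝ)..(U y), g1 s) = y := inv_eq hWc hW.nonneg ha0 hU y
  have ht : (∫ s in (0:ℝ)..(V t), g2 s) = t := inv_eq hWc hW.nonneg hγa hV t
  set x := V t with hx
  rw [hxy] at hy
  set D : ℝ → ℝ := fun s => g1 s - γ * g2 s with hD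
  have hDc : Continuous D := hg1c.sub (continuous_const.mul hg2c)
  have hDval : y - γ * t = ∫ s in (0:ℝ)..x, D s := by
    rw [hD]
    beta_reduce
    rw [intervalIntegral.integral_sub (f := g1) (g := fun s => γ * g2 s) (hg1c.intervalIntegrable _ _)
      ((continuous_const.mul hg2c : Continuous fun s => γ * g2 s).intervalIntegrable _ _),
      intervalIntegral.integral_const_mul, hy, ht]
  -- D vanishes outside Icc (-1) 1
  have hDzero : ∀ s ∉ Set.Icc (-1:ℝ) 1, D s = 0 := by
    intro s hs
    have h1s : 1 < |s| := by
      by_contra h; push_neg at h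
      exact hs (abs_le.mp h)
    have hWs : W s = 0 := hW.zero_outside s h1s
    simp only [hD, hg1, hg2, hWs, mul_zero, zero_add]
    rw [Real.sqrt_sq ha0.le, Real.sqrt_sq hγa.le]
    field_simp
    ring
  have hCS : HasCompactSupport D := HasCompactSupport.intro isCompact_Icc hDzero
  have hDint : Integrable D := hDc.integrable_of_hasCompactSupport hCS
  -- pointwise bound
  set K : ℝ := 24 * (M + 1) / δ ^ 3 with hK
  have hbound : ∀ s : ℝ, |D s| ≤ K * |γ - 1| := by
    intro s
    set A := Real.sqrt (2 * W s + a ^ 2) with hA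
    set B := Real.sqrt (2 * W s + (γ * a) ^ 2) with hB
    have hA2 : A ^ 2 = 2 * W s + a ^ 2 := Real.sq_sqrt (by nlinarith [hW.nonneg s])
    have hB2 : B ^ 2 = 2 * W s + (γ * a) ^ 2 := Real.sq_sqrt (by nlinarith [hW.nonneg s])
    have hA0 : 0 < A := hpos1 s
    have hB0 : 0 < B := hpos2 s
    have hAa : a ≤ A := by
      rw [hA]
      calc a = Real.sqrt (a ^ 2) := (Real.sqrt_sq ha0.le).symm
        _ ≤ _ := Real.sqrt_le_sqrt (by nlinarith [hW.nonneg s])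
    have hBa : γ * a ≤ B := by
      rw [hB]
      calc γ * a = Real.sqrt ((γ * a) ^ 2) := (Real.sqrt_sq hγa.le).symm
        _ ≤ _ := Real.sqrt_le_sqrt (by nlinarith [hW.nonneg s])
    have hδA : δ ≤ A := le_trans ha hAa
    have hδB : δ / 2 ≤ B := le_trans (by nlinarith) hBa
    have hkey : (B - γ * A) * (B + γ * A) = 2 * W s * (1 - γ ^ 2) := by
      have : (B - γ * A) * (B + γ * A) = B ^ 2 - γ ^ 2 * A ^ 2 := by ring
      rw [this, hA2, hB2]; ring
    have hBA0 : 0 < B + γ * A := by positivity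
    have hnum : B - γ * A = 2 * W s * (1 - γ ^ 2) / (B + γ * A) :=
      (eq_div_iff hBA0.ne').mpr hkey
    have hrepr : D s = (B - γ * A) / (A * B) := by
      simp only [hD, hg1, hg2, ← hA, ← hB]
      field_simp
    have h3 : |1 - γ ^ 2| ≤ 3 * |γ - 1| := by
      have he : 1 - γ ^ 2 = -((γ - 1) * (1 + γ)) := by ring
      rw [he, abs_neg, abs_mul, abs_of_pos (by linarith : (0:ℝ) < 1 + γ)]
      nlinarith [abs_nonneg (γ - 1)]
    have hnumabs : |B - γ * A| ≤ 6 * (M + 1) * |γ - 1| / (δ / 2) := by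
      rw [hnum, abs_div, abs_of_pos hBA0]
      apply div_le_div₀ (by positivity) ?_ (by linarith) (le_trans hδB (by nlinarith))
      rw [abs_mul, abs_of_nonneg (by nlinarith [hW.nonneg s] : (0:ℝ) ≤ 2 * W s)]
      nlinarith [hW.nonneg s, hMW s, abs_nonneg (γ - 1)]
    calc |D s| = |B - γ * A| / (A * B) := by
          rw [hrepr, abs_div, abs_of_pos (by positivity : (0:ℝ) < A * B)]
      _ ≤ (6 * (M + 1) * |γ - 1| / (δ / 2)) / (δ * (δ / 2)) := by
          apply div_le_div₀ (by positivity) hnumabs (by positivity)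
          nlinarith
      _ = K * |γ - 1| := by rw [hK]; field_simp; ring
  -- integral bound
  have hKpos : 0 ≤ K * |γ - 1| := by positivity
  have hind_int : Integrable ((Set.Icc (-1:ℝ) 1).indicator (fun _ => K * |γ - 1|)) := by
    rw [integrable_indicator_iff measurableSet_Icc]
    exact integrableOn_const (by rw [Real.volume_Icc]; exact ENNReal.ofReal_ne_top)
  have habs : |y - γ * t| ≤ ∫ s, |D s| := by
    rw [hDval]
    calc |∫ s in (0:ℝ)..x, D s| ≤ ∫ s in Set.uIoc (0:ℝ) x, ‖D s‖ := by
          rw [← Real.norm_eq_abs]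
          exact intervalIntegral.norm_integral_le_integral_norm_uIoc
      _ ≤ ∫ s, |D s| := by
          simp only [Real.norm_eq_abs]
          exact setIntegral_le_integral hDint.abs
            (Filter.Eventually.of_forall fun s => abs_nonneg _)
  have hmono : ∫ s, |D s| ≤ ∫ s, (Set.Icc (-1:ℝ) 1).indicator (fun _ => K * |γ - 1|) s := by
    apply integral_mono hDint.abs hind_int
    intro s
    by_cases hs : s ∈ Set.Icc (-1:ℝ) 1
    · rw [Set.indicator_of_mem hs]; exact hbound s
    · rw [Set.indicator_of_notMem hs]
      show |D s| ≤ 0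
      rw [hDzero s hs, abs_zero]
  have hindval : ∫ s, (Set.Icc (-1:ℝ) 1).indicator (fun _ => K * |γ - 1|) s
      = 2 * (K * |γ - 1|) := by
    rw [integral_indicator_const _ measurableSet_Icc, Real.volume_real_Icc_of_le (by norm_num)]
    rw [show (1:ℝ) - (-1) = 2 by norm_num]
    simp
  have : |y - γ * t| ≤ 2 * (K * |γ - 1|) := by
    calc |y - γ * t| ≤ ∫ s, |D s| := habs
      _ ≤ _ := hmono
      _ = _ := hindval
  calc |y - γ * t| ≤ 2 * (K * |γ - 1|) := this
    _ = 48 * (M + 1) / δ ^ 3 * |γ - 1| := by rw [hK]; ring
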